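/- For any n > 1, if the matrix ring Mₙ(R) is SSP then R is von Neumann regular; conversely if R is von Neumann regular then Mₙ(R) is SSP for every n > 1. -/

import Mathlib

def IsSummand {R M : Type*} [Ring R] [AddCommGroup M] [Module R M]
    (p : Submodule R M) : Prop :=
  ∃ q : Submodule R M, IsCompl p q

open Submodule MulOpposite

section RightIdeals
variable {S : Type*} [Ring S]

lemma opsmul_eq (a : Sᵐᵒᵖ) (b : S) : a • b = b * a.unop := rfl

lemma mem_opSpan {e x : S} : x ∈ Submodule.span Sᵐᵒᵖ {e} ↔ ∃ t : S, x = e * t := by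
  rw [Submodule.mem_span_singleton]
  constructor
  · rintro ⟨a, rfl⟩
    exact ⟨a.unop, (opsmul_eq a e).symm ▸ rfl⟩
  · rintro ⟨t, rfl⟩
    exact ⟨op t, by simp [opsmul_eq]⟩

lemma isCompl_span_idem {e : S} (he : e * e = e) :
    IsCompl (span Sᵐᵒᵖ {e}) (span Sᵐᵒᵖ {1 - e}) := by
  constructor
  · rw [disjoint_def]
    intro x hx hy
    obtain ⟨t, rfl⟩ := mem_opSpan.mp hx
    obtain ⟨s, hs⟩ := mem_opSpan.mp hy
    have h1 : e * (e * t) = e * t := by rw [← mul_assoc, he]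
    have h2 : e * ((1 - e) * s) = 0 := by
      rw [← mul_assoc, mul_sub, mul_one, he, sub_self, zero_mul]
    rw [hs] at h1
    rw [h2] at h1
    rw [hs, ← h1]
  · rw [codisjoint_iff, eq_top_iff]
    intro x _
    refine Submodule.mem_sup.mpr ⟨e * x, mem_opSpan.mpr ⟨x, rfl⟩,
      (1 - e) * x, mem_opSpan.mpr ⟨x, rfl⟩, by noncomm_ring⟩

lemma summand_span_idem {e : S} (he : e * e = e) : IsSummand (span Sᵐᵒᵖ {e}) :=
  ⟨_, isCompl_span_idem he⟩

lemma exists_idem_of_summand {p : Submodule Sᵐᵒᵖ S} (h : IsSummand p) :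
    ∃ e : S, e * e = e ∧ p = span Sᵐᵒᵖ {e} := by
  obtain ⟨q, hpq⟩ := h
  set π := Submodule.linearProjOfIsCompl p q hpq with hπ
  set e : S := (π 1 : S) with hedef
  have key : ∀ x : S, (π x : S) = e * x := by
    intro x
    have h1 : π x = op x • π 1 := by
      rw [← map_smul]
      congr 1
      rw [op_smul_eq_mul, one_mul]
    rw [h1, Submodule.coe_smul, op_smul_eq_mul]
  have hep : e ∈ p := (π 1).2
  have hproj : ∀ x ∈ p, (π x : S) = x := by
    intro x hx
    have := Submodule.linearProjOfIsCompl_apply_left hpq ⟨x, hx⟩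
    exact congrArg Subtype.val this
  have he : e * e = e := by rw [← key e, hproj e hep]
  refine ⟨e, he, le_antisymm ?_ ?_⟩
  · intro x hx
    exact mem_opSpan.mpr ⟨x, by rw [← key x, hproj x hx]⟩
  · rw [Submodule.span_le, Set.singleton_subset_iff]
    exact hep

lemma summand_iff_regular {x : S} :
    IsSummand (span Sᵐᵒᵖ {x}) ↔ ∃ y, x = x * y * x := by
  constructor
  · intro h
    obtain ⟨h0, hh, hsp⟩ := exists_idem_of_summand h
    have hx : x ∈ span Sᵐᵒᵖ {h0} := hsp ▸ Submodule.mem_span_singleton_self x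
    obtain ⟨t, ht⟩ := mem_opSpan.mp hx
    have hh0 : h0 ∈ span Sᵐᵒᵖ {x} := hsp ▸ Submodule.mem_span_singleton_self h0
    obtain ⟨u, hu⟩ := mem_opSpan.mp hh0
    have hxh : h0 * x = x := by rw [ht, ← mul_assoc, hh]
    refine ⟨u, ?_⟩
    calc x = h0 * x := hxh.symm
    _ = x * u * x := by rw [hu]
  · rintro ⟨y, hy⟩
    have hidem : (x * y) * (x * y) = x * y := by
      have : x * y * (x * y) = (x * y * x) * y := by noncomm_ring
      rw [this, ← hy]
    have hsp : span Sᵐᵒᵖ {x} = span Sᵐᵒᵖ {x * y} := by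
      apply le_antisymm
      · rw [Submodule.span_le, Set.singleton_subset_iff]
        exact mem_opSpan.mpr ⟨x, hy⟩
      · rw [Submodule.span_le, Set.singleton_subset_iff]
        exact mem_opSpan.mpr ⟨y, rfl⟩
    rw [hsp]
    exact summand_span_idem hidem

lemma span_sup_eq {e f : S} :
    span Sᵐᵒᵖ {e} ⊔ span Sᵐᵒᵖ {f} = span Sᵐᵒᵖ {e} ⊔ span Sᵐᵒᵖ {(1 - e) * f} := by
  apply le_antisymm
  · apply sup_le le_sup_left
    rw [Submodule.span_le, Set.singleton_subset_iff]
    refine Submodule.mem_sup.mpr ⟨e * f, mem_opSpan.mpr ⟨f, rfl⟩,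
      (1 - e) * f, Submodule.mem_span_singleton_self _, by rw [sub_mul, one_mul]; abel⟩
  · apply sup_le le_sup_left
    rw [Submodule.span_le, Set.singleton_subset_iff]
    refine Submodule.mem_sup.mpr ⟨e * (-f), mem_opSpan.mpr ⟨-f, rfl⟩,
      f, Submodule.mem_span_singleton_self f, ?_⟩
    rw [sub_mul, one_mul, mul_neg]
    abel

lemma span_inf_eq {e f : S} (he : e * e = e) :
    span Sᵐᵒᵖ {e} ⊓ span Sᵐᵒᵖ {(1 - e) * f} = ⊥ := by
  rw [eq_bot_iff]
  rintro x ⟨hx1, hx2⟩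
  obtain ⟨t, rfl⟩ := mem_opSpan.mp hx1
  obtain ⟨s, hs⟩ := mem_opSpan.mp hx2
  have h1 : e * (e * t) = e * t := by rw [← mul_assoc, he]
  have h2 : e * ((1 - e) * f * s) = 0 := by
    have : e * ((1 - e) * f) = 0 := by
      rw [← mul_assoc, mul_sub, mul_one, he, sub_self, zero_mul]
    rw [← mul_assoc, this, zero_mul]
  rw [hs, h2] at h1
  simp [hs, ← h1]

end RightIdeals

lemma summand_of_sup_summand {R M : Type*} [Ring R] [AddCommGroup M] [Module R M]
    {A B : Submodule R M} (hAB : A ⊓ B = ⊥) (hS : IsSummand (A ⊔ B)) : IsSummand B := by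
  obtain ⟨C, hC⟩ := hS
  refine ⟨A ⊔ C, ?_, ?_⟩
  · rw [disjoint_iff]
    have hmod : (A ⊔ C) ⊓ (A ⊔ B) = A ⊔ C ⊓ (A ⊔ B) := sup_inf_assoc_of_le C le_sup_left
    have hCB : C ⊓ (A ⊔ B) = ⊥ := by
      rw [inf_comm]; exact disjoint_iff.mp hC.disjoint
    have h2 : B ⊓ (A ⊔ C) = B ⊓ ((A ⊔ C) ⊓ (A ⊔ B)) := by
      rw [inf_comm (A ⊔ C) (A ⊔ B), ← inf_assoc, inf_eq_left.mpr (le_sup_right : B ≤ A ⊔ B)]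
    rw [h2, hmod, hCB, sup_bot_eq, inf_comm, hAB]
  · rw [codisjoint_iff, ← sup_assoc, sup_comm B A]
    exact codisjoint_iff.mp hC.codisjoint

section Regular
variable {R : Type*} [Ring R]

lemma mem_left_span {e x : R} : x ∈ span R {e} ↔ ∃ t : R, x = t * e := by
  rw [Submodule.mem_span_singleton]
  exact ⟨fun ⟨a, ha⟩ => ⟨a, by rw [← ha, smul_eq_mul]⟩, fun ⟨t, ht⟩ => ⟨t, by rw [smul_eq_mul, ← ht]⟩⟩

lemma mem_span_mul {e x : R} (he : e * e = e) (hx : x ∈ span R {e}) : x * e = x := by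
  obtain ⟨r, rfl⟩ := mem_left_span.mp hx
  rw [mul_assoc, he]

lemma sup_span_congr {u v d : R} (h1 : d ∈ span R {u} ⊔ span R {v})
    (h2 : v ∈ span R {u} ⊔ span R {d}) :
    span R {u} ⊔ span R {v} = span R {u} ⊔ span R {d} := by
  apply le_antisymm
  · refine sup_le le_sup_left ?_
    rw [span_le, Set.singleton_subset_iff]
    exact h2
  · refine sup_le le_sup_left ?_
    rw [span_le, Set.singleton_subset_iff]
    exact h1

lemma span_single_idem (hreg : ∀ a : R, ∃ b, a = a * b * a) (a : R) :
    ∃ e y, e = y * a ∧ e * e = e ∧ span R {a} = span R {e} := by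
  obtain ⟨y, hy⟩ := hreg a
  refine ⟨y * a, y, rfl, ?_, ?_⟩
  · calc y * a * (y * a) = y * (a * y * a) := by noncomm_ring
    _ = y * a := by rw [← hy]
  · apply le_antisymm <;> rw [span_le, Set.singleton_subset_iff, SetLike.mem_coe, mem_left_span]
    · exact ⟨a, by rw [← mul_assoc, ← hy]⟩
    · exact ⟨y, rfl⟩

lemma span_pair_idem (hreg : ∀ a : R, ∃ b, a = a * b * a) (a b : R) :
    ∃ g, g * g = g ∧ span R {a} ⊔ span R {b} = span R {g} := by
  obtain ⟨e, y, -, he, ha⟩ := span_single_idem hreg a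
  set c := b - b * e with hc
  have h1 : span R {a} ⊔ span R {b} = span R {e} ⊔ span R {c} := by
    rw [ha]
    apply sup_span_congr
    · exact Submodule.mem_sup.mpr ⟨-(b * e), mem_left_span.mpr ⟨-b, by rw [neg_mul]⟩,
        b, Submodule.mem_span_singleton_self b, by rw [hc]; abel⟩
    · exact Submodule.mem_sup.mpr ⟨b * e, mem_left_span.mpr ⟨b, rfl⟩,
        c, Submodule.mem_span_singleton_self c, by rw [hc]; abel⟩
  obtain ⟨f, z, hfz, hf, hcf⟩ := span_single_idem hreg c
  have hfe : f * e = 0 := by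
    have hce : c * e = 0 := by rw [hc, sub_mul, mul_assoc, he, sub_self]
    rw [hfz, mul_assoc, hce, mul_zero]
  have k1 : e * (e * f) = e * f := by rw [← mul_assoc, he]
  have k2 : f * (e * f) = 0 := by rw [← mul_assoc, hfe, zero_mul]
  have k3 : (e * f) * e = 0 := by rw [mul_assoc, hfe, mul_zero]
  have k4 : (e * f) * f = e * f := by rw [mul_assoc, hf]
  have k5 : (e * f) * (e * f) = 0 := by
    rw [mul_assoc, ← mul_assoc f e f, hfe, zero_mul, mul_zero]
  set g := e + f - e * f with hg
  refine ⟨g, ?_, ?_⟩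
  · have expand : (e + f - e * f) * (e + f - e * f) =
        e * e + e * f - e * (e * f) + (f * e + f * f - f * (e * f)) -
          ((e * f) * e + (e * f) * f - (e * f) * (e * f)) := by noncomm_ring
    rw [hg, expand, he, hf, hfe, k1, k2, k3, k4, k5]
    abel
  · rw [h1, hcf]
    apply le_antisymm
    · apply sup_le <;> rw [span_le, Set.singleton_subset_iff, SetLike.mem_coe, mem_left_span]
      · refine ⟨e, ?_⟩
        rw [hg, mul_sub, mul_add, he, k1, add_sub_cancel_right]
      · refine ⟨f, ?_⟩
        rw [hg, mul_sub, mul_add, hfe, hf, k2, sub_zero, zero_add]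
    · rw [span_le, Set.singleton_subset_iff, SetLike.mem_coe]
      refine Submodule.mem_sup.mpr ⟨e, Submodule.mem_span_singleton_self e,
        f - e * f, mem_left_span.mpr ⟨1 - e, by rw [sub_mul, one_mul]⟩, by rw [hg]; abel⟩

lemma fg_ideal_idem (hreg : ∀ a : R, ∃ b, a = a * b * a) (s : Finset R) :
    ∃ e, e * e = e ∧ span R (s : Set R) = span R {e} := by
  classical
  induction s using Finset.induction_on with
  | empty =>
    refine ⟨0, by rw [mul_zero], ?_⟩
    rw [Finset.coe_empty, span_empty, span_zero_singleton]
  | @insert a s hns ih =>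
    obtain ⟨e', he', hs⟩ := ih
    rw [Finset.coe_insert, span_insert, hs]
    exact span_pair_idem hreg a e'

end Regular

section Induction
variable {R : Type*} [Ring R]

lemma fg_summand (hreg : ∀ a : R, ∃ b, a = a * b * a) :
    ∀ n : ℕ, ∀ N : Submodule R (Fin n → R), N.FG → ∃ C, IsCompl N C := by
  intro n
  induction n with
  | zero =>
    intro N _
    have hN : N = ⊤ := by
      rw [eq_top_iff]
      intro x _
      have hx0 : x = 0 := Subsingleton.elim x 0
      rw [hx0]; exact N.zero_mem
    rw [hN]; exact ⟨⊥, isCompl_top_bot⟩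
  | succ n ih =>
    intro N hN
    classical
    set P := Fin (n+1) → R with hP
    set p : (Fin (n+1) → R) →ₗ[R] R := LinearMap.proj (Fin.last n) with hp
    set ι : (Fin n → R) →ₗ[R] (Fin (n+1) → R) :=
      { toFun := fun v => Fin.snoc v 0
        map_add' := fun v w => by
          funext i
          refine Fin.lastCases ?_ (fun j => ?_) i <;> simp
        map_smul' := fun r v => by
          funext i
          refine Fin.lastCases ?_ (fun j => ?_) i <;> simp } with hι
    have hι_apply : ∀ v, ι v = Fin.snoc v 0 := fun _ => rfl
    have hι_inj : Function.Injective ι := by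
      intro v w h
      funext i
      have h2 := congrFun h i.castSucc
      simpa [hι_apply] using h2
    have hpι : ∀ w, p (ι w) = 0 := fun w => by
      simp [hp, hι_apply]
    have hker : ∀ v : Fin (n+1) → R, p v = 0 → v ∈ LinearMap.range ι := by
      intro v hv
      have hv' : v (Fin.last n) = 0 := hv
      exact ⟨Fin.init v, by rw [hι_apply, ← hv', Fin.snoc_init_self]⟩
    have hIfg : (N.map p).FG := Submodule.FG.map p hN
    obtain ⟨sI, hsI⟩ := hIfg
    obtain ⟨e, he, hIe⟩ := fg_ideal_idem hreg sI
    have hI' : N.map p = span R {e} := by rw [← hsI, hIe]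
    obtain ⟨m₀, hm₀N, hpm₀⟩ : ∃ m, m ∈ N ∧ p m = e := by
      have hmem : e ∈ N.map p := by rw [hI']; exact Submodule.mem_span_singleton_self e
      obtain ⟨m, hm, hm'⟩ := hmem
      exact ⟨m, hm, hm'⟩
    set τ : R →ₗ[R] (Fin (n+1) → R) := LinearMap.toSpanSingleton R _ m₀ with hτ
    set π : (Fin (n+1) → R) →ₗ[R] (Fin (n+1) → R) := LinearMap.id - τ ∘ₗ p with hπ
    have hπ_apply : ∀ x, π x = x - (p x) • m₀ := fun _ => rfl
    have hpx_mul : ∀ x ∈ N, p x * e = p x := fun x hx =>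
      mem_span_mul he (hI' ▸ Submodule.mem_map_of_mem hx)
    have hπN : ∀ x ∈ N, π x ∈ N := fun x hx => by
      rw [hπ_apply]; exact sub_mem hx (N.smul_mem _ hm₀N)
    have hπker : ∀ x ∈ N, p (π x) = 0 := fun x hx => by
      rw [hπ_apply, map_sub, map_smul, hpm₀, smul_eq_mul, hpx_mul x hx, sub_self]
    set N₀ := N.map π with hN₀
    have hN₀fg : N₀.FG := hN.map π
    have hN₀N : N₀ ≤ N := by rintro y ⟨x, hx, rfl⟩; exact hπN x hx
    have hN₀ker : ∀ y ∈ N₀, p y = 0 := by rintro y ⟨x, hx, rfl⟩; exact hπker x hx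
    have hN₀mem : ∀ y ∈ N, p y = 0 → y ∈ N₀ := fun y hy hpy => by
      refine ⟨y, hy, ?_⟩
      rw [hπ_apply, hpy, zero_smul, sub_zero]
    have hN₀range : N₀ ≤ LinearMap.range ι := fun y hy => hker y (hN₀ker y hy)
    set N₁ := N₀.comap ι with hN₁
    have hmapN₁ : N₁.map ι = N₀ := Submodule.map_comap_eq_self hN₀range
    have hN₁fg : N₁.FG :=
      Submodule.fg_of_fg_map_injective ι hι_inj (by rw [hmapN₁]; exact hN₀fg)
    obtain ⟨C₁, hC₁⟩ := ih N₁ hN₁fg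
    set u : Fin (n+1) → R := Pi.single (Fin.last n) 1 with hu
    have hpu : p u = 1 := by
      simp [hp, hu]
    set W := (span R {1 - e}).map (LinearMap.toSpanSingleton R _ u) with hW
    set C := C₁.map ι ⊔ W with hC
    have hrange_eq : LinearMap.range ι = N₀ ⊔ C₁.map ι := by
      rw [← Submodule.map_top, ← codisjoint_iff.mp hC₁.codisjoint, Submodule.map_sup, hmapN₁]
    have hkerNC : ∀ v, p v = 0 → v ∈ N ⊔ C := by
      intro v hv
      have hv2 : v ∈ N₀ ⊔ C₁.map ι := hrange_eq ▸ hker v hv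
      exact (sup_le_sup hN₀N (le_sup_left.trans (le_of_eq hC.symm)) :
        N₀ ⊔ C₁.map ι ≤ N ⊔ C) hv2
    have hcod : N ⊔ C = ⊤ := by
      rw [eq_top_iff]
      intro x _
      have h1 : x - p x • u ∈ N ⊔ C := hkerNC _ (by
        rw [map_sub, map_smul, hpu, smul_eq_mul, mul_one, sub_self])
      have h2 : (p x * e) • u ∈ N ⊔ C := by
        have hsub : (p x * e) • m₀ - (p x * e) • u ∈ N ⊔ C := by
          apply hkerNC
          rw [map_sub, map_smul, map_smul, hpm₀, hpu, smul_eq_mul, smul_eq_mul, mul_one,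
            mul_assoc, he, sub_self]
        have hm : (p x * e) • m₀ ∈ N ⊔ C := Submodule.mem_sup_left (N.smul_mem _ hm₀N)
        have hres := sub_mem hm hsub
        simpa [sub_sub_cancel] using hres
      have h3 : (p x * (1 - e)) • u ∈ N ⊔ C := by
        refine Submodule.mem_sup_right (le_sup_right (a := C₁.map ι) ?_)
        exact Submodule.mem_map_of_mem (Submodule.mem_span_singleton.mpr ⟨p x, rfl⟩)
      have hdecomp : x = (x - p x • u) + ((p x * e) • u + (p x * (1 - e)) • u) := by
        rw [← add_smul]
        have : p x * e + p x * (1 - e) = p x := by noncomm_ring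
        rw [this]
        abel
      rw [hdecomp]
      exact add_mem h1 (add_mem h2 h3)
    have hdisj : N ⊓ C = ⊥ := by
      rw [eq_bot_iff]
      intro y hy
      obtain ⟨hyN, hyC⟩ := hy
      obtain ⟨c, hc, w, hw, hcw⟩ := Submodule.mem_sup.mp hyC
      obtain ⟨x', hx', rfl⟩ := hw
      obtain ⟨c₁, hc₁, rfl⟩ := hc
      subst hcw
      have hpc : p (ι c₁) = 0 := hpι c₁
      have hx'e : x' * e = 0 := by
        obtain ⟨r, rfl⟩ := mem_left_span.mp hx'
        rw [mul_assoc, sub_mul, one_mul, he, sub_self, mul_zero]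
      have htsu : (LinearMap.toSpanSingleton R (Fin (n+1) → R) u) x' = x' • u := rfl
      have hpy : p (ι c₁ + (LinearMap.toSpanSingleton R _ u) x') = x' := by
        rw [htsu, map_add, hpc, map_smul, hpu, smul_eq_mul, mul_one, zero_add]
      have hx'0 : x' = 0 := by
        have h1 := hpx_mul _ hyN
        rw [hpy] at h1
        rw [← h1, hx'e]
      have hw0 : (LinearMap.toSpanSingleton R (Fin (n+1) → R) u) x' = 0 := by
        rw [htsu, hx'0, zero_smul]
      have hy' : ι c₁ ∈ N := by rwa [hw0, add_zero] at hyN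
      have hyN₀ : ι c₁ ∈ N₀ := hN₀mem _ hy' hpc
      have hc₁N₁ : c₁ ∈ N₁ := Submodule.mem_comap.mpr hyN₀
      have hbot : c₁ ∈ (⊥ : Submodule R (Fin n → R)) := by
        rw [← disjoint_iff.mp hC₁.disjoint]
        exact ⟨hc₁N₁, hc₁⟩
      rw [Submodule.mem_bot] at hbot
      rw [hw0, add_zero, hbot, map_zero]
      exact Submodule.zero_mem ⊥
    exact ⟨C, ⟨disjoint_iff.mpr hdisj, codisjoint_iff.mpr hcod⟩⟩

end Induction

section MatrixReg
open Matrix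
variable {R : Type*} [Ring R]

lemma matrix_regular (hreg : ∀ a : R, ∃ b, a = a * b * a) (n : ℕ)
    (A : Matrix (Fin n) (Fin n) R) : ∃ B, A = A * B * A := by
  classical
  set f := A.vecMulLinear with hf
  have hrfg : (LinearMap.range f).FG := by
    rw [← Submodule.map_top]
    exact Submodule.FG.map f (Module.Finite.fg_top (R := R) (M := Fin n → R))
  obtain ⟨D, hD⟩ := fg_summand hreg n (LinearMap.range f) hrfg
  have hproj : Module.Projective R ↥(LinearMap.range f) :=
    Module.Projective.of_split (LinearMap.range f).subtype
      (Submodule.linearProjOfIsCompl _ _ hD)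
      (LinearMap.ext fun x => Submodule.linearProjOfIsCompl_apply_left hD x)
  obtain ⟨s, hs⟩ := Module.projective_lifting_property f.rangeRestrict LinearMap.id
    f.surjective_rangeRestrict
  set g := s ∘ₗ Submodule.linearProjOfIsCompl _ _ hD with hg
  have hfs : ∀ z : LinearMap.range f, f (s z) = (z : Fin n → R) := by
    intro z
    have h0 := LinearMap.ext_iff.mp hs z
    exact congrArg Subtype.val h0
  have hfgf : ∀ v, f (g (f v)) = f v := by
    intro v
    have h1 : Submodule.linearProjOfIsCompl _ _ hD (f v) = ⟨f v, LinearMap.mem_range_self f v⟩ :=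
      Submodule.linearProjOfIsCompl_apply_left hD ⟨f v, LinearMap.mem_range_self f v⟩
    rw [hg, LinearMap.comp_apply, h1, hfs]
  set B : Matrix (Fin n) (Fin n) R := Matrix.of fun i j => g (Pi.single i 1) j with hB
  have hBg : ∀ v : Fin n → R, v ᵥ* B = g v := by
    intro v
    have hv : v = ∑ i, v i • (Pi.single i 1 : Fin n → R) := by
      funext j
      rw [Finset.sum_apply]
      simp [Pi.single_apply, mul_ite]
    conv_rhs => rw [hv, map_sum]
    funext j
    rw [Finset.sum_apply]
    simp only [_root_.map_smul, Pi.smul_apply, smul_eq_mul]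
    simp [Matrix.vecMul, dotProduct, hB]
  have key : ∀ v : Fin n → R, v ᵥ* (A * B * A) = v ᵥ* A := by
    intro v
    calc v ᵥ* (A * B * A) = ((v ᵥ* A) ᵥ* B) ᵥ* A := by
          rw [← Matrix.vecMul_vecMul, ← Matrix.vecMul_vecMul]
    _ = (g (f v)) ᵥ* A := by rw [show v ᵥ* A = f v from rfl, hBg]
    _ = f (g (f v)) := rfl
    _ = f v := hfgf v
    _ = v ᵥ* A := rfl
  refine ⟨B, ?_⟩
  have hABA : A * B * A = A := by
    ext i j
    have h4 := congrFun (key (Pi.single i 1)) j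
    simpa using h4
  exact hABA.symm

end MatrixReg


lemma span_eq_of_regular {S : Type*} [Ring S] {x y : S} (hy : x = x * y * x) :
    (x * y) * (x * y) = x * y ∧
      Submodule.span Sᵐᵒᵖ {x} = Submodule.span Sᵐᵒᵖ {x * y} := by
  constructor
  · have h : x * y * (x * y) = (x * y * x) * y := by noncomm_ring
    rw [h, ← hy]
  · apply le_antisymm
    · rw [Submodule.span_le, Set.singleton_subset_iff]
      exact mem_opSpan.mpr ⟨x, hy⟩
    · rw [Submodule.span_le, Set.singleton_subset_iff]
      exact mem_opSpan.mpr ⟨y, rfl⟩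


lemma sup_orth_idem {S : Type*} [Ring S] {e h : S} (he : e * e = e) (hh : h * h = h)
    (heh : e * h = 0) :
    ∃ k : S, k * k = k ∧
      Submodule.span Sᵐᵒᵖ {e} ⊔ Submodule.span Sᵐᵒᵖ {h} = Submodule.span Sᵐᵒᵖ {k} := by
  have k1 : e * (h * e) = 0 := by rw [← mul_assoc, heh, zero_mul]
  have k2 : h * (h * e) = h * e := by rw [← mul_assoc, hh]
  have k3 : (h * e) * e = h * e := by rw [mul_assoc, he]
  have k4 : (h * e) * h = 0 := by rw [mul_assoc, heh, mul_zero]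
  have k5 : (h * e) * (h * e) = 0 := by
    rw [mul_assoc, ← mul_assoc e h e, heh, zero_mul, mul_zero]
  refine ⟨e + h - h * e, ?_, ?_⟩
  · have expand : (e + h - h * e) * (e + h - h * e) =
        e * e + e * h - e * (h * e) + (h * e + h * h - h * (h * e)) -
          ((h * e) * e + (h * e) * h - (h * e) * (h * e)) := by noncomm_ring
    rw [expand, he, hh, heh, k1, k2, k3, k4, k5]
    abel
  · apply le_antisymm
    · apply sup_le <;> rw [Submodule.span_le, Set.singleton_subset_iff, SetLike.mem_coe,
        mem_opSpan]
      · refine ⟨e, ?_⟩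
        rw [sub_mul, add_mul, he, k3]
        abel
      · refine ⟨h, ?_⟩
        rw [sub_mul, add_mul, heh, hh, k4]
        abel
    · rw [Submodule.span_le, Set.singleton_subset_iff, SetLike.mem_coe]
      refine Submodule.mem_sup.mpr ⟨e, Submodule.mem_span_singleton_self e,
        h * (1 - e), mem_opSpan.mpr ⟨1 - e, rfl⟩, ?_⟩
      rw [mul_sub, mul_one]
      abel

theorem stmt14 {R : Type*} [Ring R] :
    (∀ n : ℕ, 1 < n →
      (∀ p q : Submodule (Matrix (Fin n) (Fin n) R)ᵐᵒᵖ (Matrix (Fin n) (Fin n) R),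
        IsSummand p → IsSummand q → IsSummand (p ⊔ q)) →
      ∀ a : R, ∃ b : R, a = a * b * a) ∧
    ((∀ a : R, ∃ b : R, a = a * b * a) →
      ∀ n : ℕ, 1 < n →
      ∀ p q : Submodule (Matrix (Fin n) (Fin n) R)ᵐᵒᵖ (Matrix (Fin n) (Fin n) R),
        IsSummand p → IsSummand q → IsSummand (p ⊔ q)) := by
  constructor
  · -- SSP of Mₙ(R) implies R regular
    intro n hn hssp a
    set i0 : Fin n := ⟨0, by omega⟩
    set i1 : Fin n := ⟨1, hn⟩
    have h01 : i0 ≠ i1 := by simp [i0, i1, Fin.ext_iff]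
    set e : Matrix (Fin n) (Fin n) R := Matrix.single i0 i0 1 with hedef
    set f : Matrix (Fin n) (Fin n) R :=
      Matrix.single i0 i0 1 + Matrix.single i1 i0 a with hfdef
    have he : e * e = e := by simp [hedef]
    have hf : f * f = f := by
      simp [hfdef, mul_add, add_mul, Matrix.single_mul_single_of_ne _ _ _ _ h01,
        Matrix.single_mul_single_of_ne _ _ _ _ h01.symm]
    have hef : (1 - e) * f = Matrix.single i1 i0 a := by
      rw [sub_mul, one_mul, hfdef, hedef]
      simp [mul_add, Matrix.single_mul_single_of_ne _ _ _ _ h01]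
    have hsup := hssp _ _ (summand_span_idem he) (summand_span_idem hf)
    rw [span_sup_eq] at hsup
    have hsummand := summand_of_sup_summand (span_inf_eq he) hsup
    rw [hef] at hsummand
    obtain ⟨B, hB⟩ := summand_iff_regular.mp hsummand
    refine ⟨B i0 i1, ?_⟩
    have h2 := congrFun (congrFun hB i1) i0
    rw [Matrix.single_apply_same, mul_assoc,
      Matrix.single_mul_apply_same,
      Matrix.mul_single_apply_same] at h2
    rw [← mul_assoc] at h2
    exact h2
  · -- R regular implies SSP of Mₙ(R)
    intro hreg n hn p q hp hq
    obtain ⟨e, he, rfl⟩ := exists_idem_of_summand hp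
    obtain ⟨f, hf, rfl⟩ := exists_idem_of_summand hq
    obtain ⟨y, hy⟩ := matrix_regular hreg n ((1 - e) * f)
    obtain ⟨hidem, hspan⟩ := span_eq_of_regular hy
    have heh : e * ((1 - e) * f * y) = 0 := by
      have h1 : e * (1 - e) = 0 := by rw [mul_sub, mul_one, he, sub_self]
      have h2 : e * ((1 - e) * f * y) = (e * (1 - e)) * (f * y) := by noncomm_ring
      rw [h2, h1, zero_mul]
    obtain ⟨k, hkk, hsup2⟩ := sup_orth_idem he hidem heh
    rw [span_sup_eq, hspan, hsup2]
    exact summand_span_idem hkk
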